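/- arXiv:2012.10409 — 5 statements merged into one kernel-verified Lean document; each statement's English description precedes it below -/
import Mathlib

section
/- For every positive integer m there exists a finite simple graph G on exactly 7m vertices (namely the balanced blow-up of C̄₇ with each vertex replaced by an independent set of size m) such that G is locally bipartite, every vertex of G has degree exactly 4m, and G is not 3-colourable. Consequently the bound 4/7 in the statement 'every locally bipartite graph with δ(G) > (4/7)·|G| is 3-colourable' cannot be replaced by any smaller constant. -/
open SimpleGraph

/-- A finite simple graph is *locally bipartite* if each neighbourhood induces a
bipartite (equivalently, 2-colourable) graph. -/
def LocallyBipartite {V : Type*} (G : SimpleGraph V) : Prop :=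
  ∀ v : V, (G.induce (G.neighborSet v)).Colorable 2

/-- `C̄₇`, the complement of the 7-cycle: `i` and `j` are adjacent iff they differ by
`±2` or `±3` modulo 7. -/
def C7bar : SimpleGraph (ZMod 7) :=
  SimpleGraph.fromRel (fun i j => j = i + 2 ∨ j = i + 3)

/-- `H₀`, the Moser spindle: the 7-cycle `v₀v₁…v₆` together with the edges
`v₀v₂`, `v₀v₅`, `v₁v₃`, `v₄v₆`. -/
def H0 : SimpleGraph (ZMod 7) :=
  SimpleGraph.fromRel (fun i j =>
    j = i + 1 ∨ (i = 0 ∧ j = 2) ∨ (i = 0 ∧ j = 5) ∨ (i = 1 ∧ j = 3) ∨ (i = 4 ∧ j = 6))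

/-- `H₁`: the 7-cycle `v₀v₁…v₆` together with the edges
`v₃v₅`, `v₅v₀`, `v₀v₂`, `v₂v₄`, `v₆v₁`. -/
def H1 : SimpleGraph (ZMod 7) :=
  SimpleGraph.fromRel (fun i j =>
    j = i + 1 ∨ (i = 3 ∧ j = 5) ∨ (i = 5 ∧ j = 0) ∨ (i = 0 ∧ j = 2) ∨
      (i = 2 ∧ j = 4) ∨ (i = 6 ∧ j = 1))

/-- `H₂`: the 7-cycle `v₀v₁…v₆` together with the edges
`v₁v₃`, `v₃v₅`, `v₅v₀`, `v₀v₂`, `v₂v₄`, `v₄v₆`. -/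
def H2 : SimpleGraph (ZMod 7) :=
  SimpleGraph.fromRel (fun i j =>
    j = i + 1 ∨ (i = 1 ∧ j = 3) ∨ (i = 3 ∧ j = 5) ∨ (i = 5 ∧ j = 0) ∨
      (i = 0 ∧ j = 2) ∨ (i = 2 ∧ j = 4) ∨ (i = 4 ∧ j = 6))

/-- `H₂⁺`: the graph `H₂` (on the `some` vertices) together with an extra vertex
(`none`) joined to exactly `v₀`, `v₂` and `v₅`. -/
def H2plus : SimpleGraph (Option (ZMod 7)) :=
  SimpleGraph.fromRel (fun a b =>
    match a, b with
    | some i, some j =>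
        j = i + 1 ∨ (i = 1 ∧ j = 3) ∨ (i = 3 ∧ j = 5) ∨ (i = 5 ∧ j = 0) ∨
          (i = 0 ∧ j = 2) ∨ (i = 2 ∧ j = 4) ∨ (i = 4 ∧ j = 6)
    | none, some j => j = 0 ∨ j = 2 ∨ j = 5
    | _, _ => False)

/-- A graph `G` contains a copy of `H` if there is an injective graph homomorphism
from `H` to `G`, i.e. `G` has a (not necessarily induced) subgraph isomorphic to `H`. -/
def ContainsCopy {W V : Type*} (H : SimpleGraph W) (G : SimpleGraph V) : Prop :=
  ∃ f : H →g G, Function.Injective f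

/-- A pair of vertices `u, v` is *dense* if the common neighbourhood of `u` and `v`
contains an edge. -/
def DensePair {V : Type*} (G : SimpleGraph V) (u v : V) : Prop :=
  ∃ x y : V, G.Adj u x ∧ G.Adj v x ∧ G.Adj u y ∧ G.Adj v y ∧ G.Adj x y

/-- A pair of distinct vertices `u, v` is *sparse* if `u` and `v` are not adjacent and
the common neighbourhood of `u` and `v` contains no edge. -/
def SparsePair {V : Type*} (G : SimpleGraph V) (u v : V) : Prop :=
  u ≠ v ∧ ¬ G.Adj u v ∧ ¬ DensePair G u v

/-- A set of vertices is independent if it contains no edge. -/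
def IsIndepSet {V : Type*} (G : SimpleGraph V) (s : Set V) : Prop :=
  ∀ ⦃u⦄, u ∈ s → ∀ ⦃v⦄, v ∈ s → ¬ G.Adj u v

set_option maxRecDepth 10000

instance : DecidableRel C7bar.Adj := fun a b =>
  inferInstanceAs (Decidable (a ≠ b ∧ ((b = a + 2 ∨ b = a + 3) ∨ (a = b + 2 ∨ a = b + 3))))

lemma C7bar_key : ∀ i a b : ZMod 7, C7bar.Adj i a → C7bar.Adj i b → C7bar.Adj a b →
    ((a - i = 2 ∨ a - i = 3) ↔ ¬(b - i = 2 ∨ b - i = 3)) := by decide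

lemma C7bar_deg4 : ∀ w : ZMod 7,
    (Finset.univ.filter fun a : Fin 7 => C7bar.Adj w ((a : ℕ) : ZMod 7)).card = 4 := by decide

lemma C7bar_indep2 : ∀ a b c : ZMod 7, a ≠ b → a ≠ c → b ≠ c →
    C7bar.Adj a b ∨ C7bar.Adj a c ∨ C7bar.Adj b c := by decide

lemma C7bar_nocolor : ¬ ∃ f : ZMod 7 → Fin 3, ∀ a b, C7bar.Adj a b → f a ≠ f b := by
  rintro ⟨f, hf⟩
  have h7 : (Finset.univ : Finset (ZMod 7)).card = 7 := by decide
  have hfib : ∀ c : Fin 3, (Finset.univ.filter (fun a : ZMod 7 => f a = c)).card ≤ 2 := by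
    intro c
    by_contra h
    push_neg at h
    obtain ⟨a, ha, b, hb, d, hd, hab, had, hbd⟩ := Finset.two_lt_card.mp h
    simp only [Finset.mem_filter, Finset.mem_univ, true_and] at ha hb hd
    rcases C7bar_indep2 a b d hab had hbd with h' | h' | h'
    · exact hf _ _ h' (ha.trans hb.symm)
    · exact hf _ _ h' (ha.trans hd.symm)
    · exact hf _ _ h' (hb.trans hd.symm)
  have h := Finset.card_eq_sum_card_fiberwise (f := f) (s := Finset.univ)
    (t := Finset.univ) (fun x _ => Finset.mem_univ _)
  rw [h7] at h
  have : (7:ℕ) ≤ ∑ c : Fin 3, 2 := h ▸ Finset.sum_le_sum (fun c _ => hfib c)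
  simp at this

/-- For every `m ≥ 1` there is a graph on exactly `7m` vertices (the balanced blow-up of
`C̄₇`) which is locally bipartite, `4m`-regular, and not 3-colourable; hence the constant
`4/7` in the 3-colourability theorem is optimal. -/
theorem exists_locallyBipartite_regular_not_three_colorable (m : ℕ) (hm : 0 < m) :
    ∃ G : SimpleGraph (Fin (7 * m)),
      LocallyBipartite G ∧
      (∀ v : Fin (7 * m), (G.neighborSet v).ncard = 4 * m) ∧
      ¬ G.Colorable 3 := by
  set g : Fin (7 * m) → ZMod 7 := fun u => (((finProdFinEquiv.symm u).1 : ℕ) : ZMod 7) with hg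
  refine ⟨C7bar.comap g, ?_, ?_, ?_⟩
  · -- locally bipartite
    intro v
    refine ⟨Coloring.mk
      (fun p => if (g p.1 - g v = 2 ∨ g p.1 - g v = 3) then 0 else 1) ?_⟩
    rintro ⟨a, ha⟩ ⟨b, hb⟩ hab
    have ha' : C7bar.Adj (g v) (g a) := ha
    have hb' : C7bar.Adj (g v) (g b) := hb
    have hab' : C7bar.Adj (g a) (g b) := hab
    have hk := C7bar_key (g v) (g a) (g b) ha' hb' hab'
    by_cases h1 : g a - g v = 2 ∨ g a - g v = 3
    · have h2 := hk.mp h1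
      simp only [if_pos h1, if_neg h2]
      decide
    · have h2 : g b - g v = 2 ∨ g b - g v = 3 := by
        by_contra h2
        exact h1 (hk.mpr h2)
      simp only [if_neg h1, if_pos h2]
      decide
  · -- degrees
    intro v
    have hset : (C7bar.comap g).neighborSet v =
        ↑(Finset.univ.filter fun u => C7bar.Adj (g v) (g u)) := by
      ext u
      simp [SimpleGraph.mem_neighborSet, SimpleGraph.comap_adj]
    rw [hset, Set.ncard_coe_finset]
    have := Finset.card_equiv (finProdFinEquiv.symm)
      (s := Finset.univ.filter fun u => C7bar.Adj (g v) (g u))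
      (t := (Finset.univ.filter fun a : Fin 7 => C7bar.Adj (g v) ((a : ℕ) : ZMod 7)) ×ˢ
        Finset.univ) ?_
    · rw [this, Finset.card_product, C7bar_deg4, Finset.card_univ, Fintype.card_fin]
    · intro u
      simp [Finset.mem_product, hg]
  · -- not 3-colorable
    rintro ⟨C⟩
    apply C7bar_nocolor
    refine ⟨fun i => C (finProdFinEquiv (⟨i.val, i.val_lt⟩, ⟨0, hm⟩)), ?_⟩
    intro a b hab
    apply C.valid
    show C7bar.Adj (g _) (g _)
    have h1 : ∀ i : ZMod 7,
        g (finProdFinEquiv (⟨i.val, i.val_lt⟩, ⟨0, hm⟩)) = i := by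
      intro i
      simp only [hg, Equiv.symm_apply_apply]
      exact ZMod.natCast_rightInverse i
    rw [h1, h1]
    exact hab
end

section
/- For every ε > 0 there exists a finite simple locally bipartite graph G with δ(G) ≥ (5/9 − ε)·|G| such that G admits no graph homomorphism to C̄₇ (such graphs are obtained as suitable blow-ups of H₂⁺). Consequently the bound 5/9 in the statement 'every locally bipartite graph with δ(G) > (5/9)·|G| is homomorphic to C̄₇' cannot be replaced by any smaller constant. -/
open SimpleGraph

-- raw decidable version of C7bar adjacency
def Craw (i j : ZMod 7) : Prop :=
  i ≠ j ∧ ((j = i + 2 ∨ j = i + 3) ∨ (i = j + 2 ∨ i = j + 3))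

instance : DecidableRel Craw := fun _ _ => by unfold Craw; infer_instance

lemma c7_iff (i j : ZMod 7) : C7bar.Adj i j ↔ Craw i j :=
  SimpleGraph.fromRel_adj _ i j

-- raw decidable version of H2plus adjacency
def hrelB (a b : Option (ZMod 7)) : Bool :=
  match a, b with
  | some i, some j =>
      decide (j = i + 1 ∨ (i = 1 ∧ j = 3) ∨ (i = 3 ∧ j = 5) ∨ (i = 5 ∧ j = 0) ∨
          (i = 0 ∧ j = 2) ∨ (i = 2 ∧ j = 4) ∨ (i = 4 ∧ j = 6))
  | none, some j => decide (j = 0 ∨ j = 2 ∨ j = 5)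
  | _, _ => false

def Hraw (a b : Option (ZMod 7)) : Prop :=
  a ≠ b ∧ (hrelB a b = true ∨ hrelB b a = true)

instance : DecidableRel Hraw := fun _ _ => by unfold Hraw; infer_instance

lemma h2_iff (a b : Option (ZMod 7)) : H2plus.Adj a b ↔ Hraw a b := by
  have h : ∀ x y : Option (ZMod 7),
      (match x, y with
       | some i, some j =>
           j = i + 1 ∨ (i = 1 ∧ j = 3) ∨ (i = 3 ∧ j = 5) ∨ (i = 5 ∧ j = 0) ∨
             (i = 0 ∧ j = 2) ∨ (i = 2 ∧ j = 4) ∨ (i = 4 ∧ j = 6)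
       | none, some j => j = 0 ∨ j = 2 ∨ j = 5
       | _, _ => False) ↔ hrelB x y = true := by
    rintro (_ | i) (_ | j) <;> simp [hrelB]
  refine (SimpleGraph.fromRel_adj _ a b).trans ?_
  rw [Hraw, h, h]

set_option synthInstance.maxSize 5000 in
set_option maxHeartbeats 2000000 in
theorem keyNoHom : ∀ a0 a1 : ZMod 7, Craw a0 a1 → ∀ a2, Craw a1 a2 → Craw a0 a2 →
    ∀ a3, Craw a2 a3 → Craw a1 a3 → ∀ a4, Craw a3 a4 → Craw a2 a4 →
    ∀ a5, Craw a4 a5 → Craw a3 a5 → Craw a0 a5 →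
    ∀ a6, Craw a5 a6 → Craw a0 a6 → Craw a4 a6 →
    ∀ au, Craw au a0 → Craw au a2 → Craw au a5 → False := by decide

-- blow-up pattern
def pat : Fin 9 → Option (ZMod 7) :=
  ![none, some 0, some 0, some 2, some 2, some 3, some 4, some 5, some 5]

def bpi (m : ℕ) (i : Fin (9 * m + 2)) : Option (ZMod 7) :=
  if (i : ℕ) < 9 * m then pat ⟨(i : ℕ) % 9, Nat.mod_lt _ (by norm_num)⟩
  else if (i : ℕ) = 9 * m then some 1 else some 6

-- positions table: for each vertex v, 5 pattern positions adjacent to v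
def epos : Option (ZMod 7) → Fin 5 → Fin 9
  | none => ![1, 2, 3, 4, 7]
  | some 0 => ![0, 3, 4, 7, 8]
  | some 1 => ![1, 2, 3, 4, 5]
  | some 2 => ![0, 1, 2, 5, 6]
  | some 3 => ![3, 4, 6, 7, 8]
  | some 4 => ![3, 4, 5, 7, 8]
  | some 5 => ![0, 1, 2, 5, 6]
  | some 6 => ![1, 2, 6, 7, 8]

lemma epos_adj : ∀ (v : Option (ZMod 7)) (k : Fin 5), Hraw v (pat (epos v k)) := by decide

lemma epos_inj : ∀ (v : Option (ZMod 7)) (k k' : Fin 5), epos v k = epos v k' → k = k' := by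
  decide

-- 2-colouring of each neighbourhood
def col : Option (ZMod 7) → Option (ZMod 7) → Fin 2
  | none, a => if a = some 0 then 1 else 0
  | some 0, a => if a = some 2 ∨ a = some 5 then 1 else 0
  | some 1, a => if a = some 2 then 1 else 0
  | some 2, a => if a = some 0 ∨ a = some 3 then 1 else 0
  | some 3, a => if a = some 2 ∨ a = some 5 then 1 else 0
  | some 4, a => if a = some 3 ∨ a = some 6 then 1 else 0
  | some 5, a => if a = some 4 ∨ a = some 0 then 1 else 0
  | some 6, a => if a = some 5 then 1 else 0

lemma col_prop : ∀ v a b : Option (ZMod 7),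
    Hraw v a → Hraw v b → Hraw a b → col v a ≠ col v b := by decide

/-- For every `ε > 0` there is a locally bipartite graph `G` with minimum degree at least
`(5/9 − ε)·|G|` (every vertex has degree at least `(5/9 − ε)·|G|`) admitting no
homomorphism to `C̄₇`; hence the constant `5/9` is optimal. -/
theorem exists_locallyBipartite_no_hom_to_C7bar (eps : ℝ) (heps : 0 < eps) :
    ∃ (n : ℕ) (G : SimpleGraph (Fin n)),
      LocallyBipartite G ∧
      (∀ v : Fin n, (5 / 9 - eps) * (n : ℝ) ≤ ((G.neighborSet v).ncard : ℝ)) ∧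
      ¬ Nonempty (G →g C7bar) := by
  set m : ℕ := max 1 ⌈1 / eps⌉₊ with hmdef
  have hm1 : 1 ≤ m := le_max_left _ _
  have hmeps : 1 ≤ eps * m := by
    have h1 : (1 / eps : ℝ) ≤ ⌈1 / eps⌉₊ := Nat.le_ceil _
    have h2 : (⌈1 / eps⌉₊ : ℝ) ≤ m := by
      exact_mod_cast Nat.cast_le.mpr (le_max_right _ _)
    have := h1.trans h2
    rw [div_le_iff₀ heps] at this
    linarith
  refine ⟨9 * m + 2, H2plus.comap (bpi m), ?_, ?_, ?_⟩
  · -- locally bipartite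
    intro x
    refine ⟨SimpleGraph.Coloring.mk (fun y => col (bpi m x) (bpi m y.1)) ?_⟩
    rintro ⟨a, ha⟩ ⟨b, hb⟩ hab
    have h1 : H2plus.Adj (bpi m x) (bpi m a) := ha
    have h2 : H2plus.Adj (bpi m x) (bpi m b) := hb
    have h3 : H2plus.Adj (bpi m a) (bpi m b) := hab
    exact col_prop _ _ _ ((h2_iff _ _).mp h1) ((h2_iff _ _).mp h2) ((h2_iff _ _).mp h3)
  · -- degree bound
    intro x
    set v := bpi m x with hv
    -- injection from Fin 5 × Fin m into the neighbour set
    have hF : ∀ (k : Fin 5) (b : Fin m), 9 * (b : ℕ) + (epos v k : ℕ) < 9 * m + 2 := by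
      intro k b
      have hb := b.isLt
      have he := (epos v k).isLt
      omega
    have hFlt : ∀ (k : Fin 5) (b : Fin m), 9 * (b : ℕ) + (epos v k : ℕ) < 9 * m := by
      intro k b
      have hb := b.isLt
      have he := (epos v k).isLt
      omega
    have hmem : ∀ (k : Fin 5) (b : Fin m),
        (⟨9 * (b : ℕ) + (epos v k : ℕ), hF k b⟩ : Fin (9 * m + 2)) ∈
          (H2plus.comap (bpi m)).neighborSet x := by
      intro k b
      have hlt := hFlt k b
      have hmod : (9 * (b : ℕ) + (epos v k : ℕ)) % 9 = (epos v k : ℕ) := by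
        have he := (epos v k).isLt
        omega
      show H2plus.Adj (bpi m x) (bpi m _)
      rw [← hv]
      have : bpi m (⟨9 * (b : ℕ) + (epos v k : ℕ), hF k b⟩ : Fin (9 * m + 2)) =
          pat (epos v k) := by
        rw [bpi]
        simp only [hlt, if_pos]
        congr 1
        exact Fin.ext hmod
      rw [this]
      exact (h2_iff _ _).mpr (epos_adj v k)
    let F : Fin 5 × Fin m → ((H2plus.comap (bpi m)).neighborSet x : Set (Fin (9 * m + 2))) :=
      fun p => ⟨⟨9 * (p.2 : ℕ) + (epos v p.1 : ℕ), hF p.1 p.2⟩, hmem p.1 p.2⟩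
    have hFinj : Function.Injective F := by
      rintro ⟨k, b⟩ ⟨k', b'⟩ h
      have h' : 9 * (b : ℕ) + (epos v k : ℕ) = 9 * (b' : ℕ) + (epos v k' : ℕ) := by
        have := congrArg (fun y => ((y : Fin (9 * m + 2)) : ℕ)) (Subtype.ext_iff.mp h)
        simpa using this
      have he := (epos v k).isLt
      have he' := (epos v k').isLt
      have hbb : (b : ℕ) = (b' : ℕ) := by omega
      have hee : (epos v k : ℕ) = (epos v k' : ℕ) := by omega
      have : k = k' := epos_inj v k k' (Fin.ext hee)
      exact Prod.ext this (Fin.ext hbb)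
    have hcard : 5 * m ≤ ((H2plus.comap (bpi m)).neighborSet x).ncard := by
      have := Nat.card_le_card_of_injective F hFinj
      rw [Nat.card_eq_fintype_card, Fintype.card_prod, Fintype.card_fin, Fintype.card_fin] at this
      rwa [← Nat.card_coe_set_eq]
    -- real arithmetic
    have hcast : (5 * m : ℝ) ≤ (((H2plus.comap (bpi m)).neighborSet x).ncard : ℝ) := by
      exact_mod_cast hcard
    have hineq : (5 / 9 - eps) * ((9 * m + 2 : ℕ) : ℝ) ≤ (5 * m : ℝ) := by
      push_cast
      nlinarith [hmeps, heps.le, (by exact_mod_cast hm1 : (1 : ℝ) ≤ (m : ℝ))]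
    exact hineq.trans hcast
  · -- no homomorphism
    rintro ⟨f⟩
    have h9 : 8 < 9 * m := by omega
    let s : Option (ZMod 7) → Fin (9 * m + 2) := fun a =>
      match a with
      | none => ⟨0, by omega⟩
      | some 0 => ⟨1, by omega⟩
      | some 1 => ⟨9 * m, by omega⟩
      | some 2 => ⟨3, by omega⟩
      | some 3 => ⟨5, by omega⟩
      | some 4 => ⟨6, by omega⟩
      | some 5 => ⟨7, by omega⟩
      | some 6 => ⟨9 * m + 1, by omega⟩
    have hs : ∀ a, bpi m (s a) = a := by
      have hp : ∀ (j : ℕ) (hj : j < 9 * m + 2), j < 9 * m →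
          bpi m ⟨j, hj⟩ = pat ⟨j % 9, Nat.mod_lt _ (by norm_num)⟩ := by
        intro j hj hlt
        rw [bpi]
        simp [hlt]
      rintro (_ | i)
      · show bpi m ⟨0, _⟩ = none
        rw [hp 0 _ (by omega)]; rfl
      · match i with
        | 0 => show bpi m ⟨1, _⟩ = some 0; rw [hp 1 _ (by omega)]; rfl
        | 1 =>
          show bpi m ⟨9 * m, _⟩ = some 1
          rw [bpi]
          simp
        | 2 => show bpi m ⟨3, _⟩ = some 2; rw [hp 3 _ (by omega)]; rfl
        | 3 => show bpi m ⟨5, _⟩ = some 3; rw [hp 5 _ (by omega)]; rfl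
        | 4 => show bpi m ⟨6, _⟩ = some 4; rw [hp 6 _ (by omega)]; rfl
        | 5 => show bpi m ⟨7, _⟩ = some 5; rw [hp 7 _ (by omega)]; rfl
        | 6 =>
          show bpi m ⟨9 * m + 1, _⟩ = some 6
          rw [bpi]
          simp
    have hg : ∀ a b : Option (ZMod 7), Hraw a b → Craw (f (s a)) (f (s b)) := by
      intro a b h
      have hadj : (H2plus.comap (bpi m)).Adj (s a) (s b) := by
        show H2plus.Adj (bpi m (s a)) (bpi m (s b))
        rw [hs, hs]
        exact (h2_iff _ _).mpr h
      exact (c7_iff _ _).mp (f.map_adj hadj)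
    exact keyNoHom (f (s (some 0))) (f (s (some 1))) (hg (some 0) (some 1) (by decide))
      (f (s (some 2))) (hg (some 1) (some 2) (by decide)) (hg (some 0) (some 2) (by decide))
      (f (s (some 3))) (hg (some 2) (some 3) (by decide)) (hg (some 1) (some 3) (by decide))
      (f (s (some 4))) (hg (some 3) (some 4) (by decide)) (hg (some 2) (some 4) (by decide))
      (f (s (some 5))) (hg (some 4) (some 5) (by decide)) (hg (some 3) (some 5) (by decide))
      (hg (some 0) (some 5) (by decide))
      (f (s (some 6))) (hg (some 5) (some 6) (by decide)) (hg (some 0) (some 6) (by decide))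
      (hg (some 4) (some 6) (by decide))
      (f (s none)) (hg none (some 0) (by decide)) (hg none (some 2) (by decide))
      (hg none (some 5) (by decide))
end

section
/- Let F be a finite simple graph that is twin-free and edge-maximal locally bipartite, and let G be a finite simple locally bipartite graph. If there is a graph homomorphism from F to G, then F is isomorphic to an induced subgraph of G. -/
open SimpleGraph

/-- The graph obtained from `F` by adding the edge `uv` (when `u ≠ v`). -/
def AddEdge {V : Type*} (F : SimpleGraph V) (u v : V) : SimpleGraph V :=
  F ⊔ SimpleGraph.fromRel (fun a b => a = u ∧ b = v)

/-- If `F` is twin-free and edge-maximal locally bipartite, and `F` is homomorphic to a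
locally bipartite graph `G`, then `F` is an induced subgraph of `G`. -/
theorem twinFree_edgeMaximal_hom_implies_induced {V W : Type} [Fintype V] [Fintype W]
    (F : SimpleGraph V) (G : SimpleGraph W)
    (htwinfree : ∀ u v : V, F.neighborSet u = F.neighborSet v → u = v)
    (hFlb : LocallyBipartite F)
    (hFmax : ∀ u v : V, u ≠ v → ¬ F.Adj u v → ¬ LocallyBipartite (AddEdge F u v))
    (hGlb : LocallyBipartite G)
    (hhom : Nonempty (F →g G)) :
    Nonempty (F ↪g G) := by
  obtain ⟨f⟩ := hhom
  -- Step A: f maps non-adjacent distinct pairs to non-adjacent images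
  have stepA : ∀ u v : V, u ≠ v → ¬ F.Adj u v → ¬ G.Adj (f u) (f v) := by
    intro u v huv hnadj hGadj
    apply hFmax u v huv hnadj
    intro x
    obtain ⟨c⟩ := hGlb (f x)
    have hmem : ∀ a : V, a ∈ (AddEdge F u v).neighborSet x → f a ∈ G.neighborSet (f x) := by
      intro a ha
      simp only [SimpleGraph.mem_neighborSet, AddEdge, SimpleGraph.sup_adj,
        SimpleGraph.fromRel_adj] at ha ⊢
      rcases ha with h | ⟨hne, h | h⟩
      · exact f.map_adj h
      · obtain ⟨rfl, rfl⟩ := h; exact hGadj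
      · obtain ⟨rfl, rfl⟩ := h; exact hGadj.symm
    let φ : (AddEdge F u v).induce ((AddEdge F u v).neighborSet x) →g
        G.induce (G.neighborSet (f x)) :=
      { toFun := fun a => ⟨f a.1, hmem a.1 a.2⟩
        map_rel' := by
          rintro ⟨a, ha⟩ ⟨b, hb⟩ hab
          simp only [SimpleGraph.comap_adj, Function.Embedding.coe_subtype, AddEdge,
            SimpleGraph.sup_adj, SimpleGraph.fromRel_adj] at hab ⊢
          rcases hab with h | ⟨hne, h | h⟩
          · exact f.map_adj h
          · obtain ⟨rfl, rfl⟩ := h; exact hGadj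
          · obtain ⟨rfl, rfl⟩ := h; exact hGadj.symm }
    exact ⟨c.comp φ⟩
  have key : ∀ u v : V, G.Adj (f u) (f v) → u ≠ v → F.Adj u v := by
    intro u v h hne
    by_contra hn
    exact stepA u v hne hn h
  -- injectivity via twin-freeness
  have hsub : ∀ a b : V, f a = f b → a ≠ b → F.neighborSet a ⊆ F.neighborSet b := by
    intro a b hfe hne w hw
    simp only [SimpleGraph.mem_neighborSet] at hw ⊢
    have hG : G.Adj (f b) (f w) := hfe ▸ f.map_adj hw
    have hwb : b ≠ w := by
      rintro rfl
      exact G.irrefl (hfe ▸ f.map_adj hw)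
    exact key b w hG hwb
  have hinj : Function.Injective f := by
    intro a b hfe
    by_contra hne
    exact hne (htwinfree a b (Set.Subset.antisymm (hsub a b hfe hne)
      (hsub b a hfe.symm (Ne.symm hne))))
  refine ⟨⟨⟨f, hinj⟩, ?_⟩⟩
  intro a b
  constructor
  · intro hG
    rcases eq_or_ne a b with rfl | hne
    · exact absurd hG (G.irrefl)
    · exact key a b hG hne
  · exact fun h => f.map_adj h
end

section
/- Let G be a finite simple graph with δ(G) > (1/2)·|G| and let I be an independent set of G of maximum size. Then for every two distinct vertices u, v ∈ I, the pair u, v is dense, i.e. the common neighbourhood of u and v contains an edge of G. -/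
open SimpleGraph

/-- In a graph of minimum degree greater than `|G|/2`, every two distinct vertices of a
largest independent set form a dense pair. -/
theorem dense_pairs_in_max_independent_set {V : Type} [Fintype V]
    (G : SimpleGraph V) [DecidableRel G.Adj]
    (hdeg : (1 / 2 : ℝ) * (Fintype.card V : ℝ) < (G.minDegree : ℝ))
    (I : Set V) (hI : _root_.IsIndepSet G I)
    (hImax : ∀ J : Set V, _root_.IsIndepSet G J → J.ncard ≤ I.ncard) :
    ∀ u ∈ I, ∀ v ∈ I, u ≠ v → DensePair G u v := by
  intro u hu v hv huv
  by_contra hdense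
  set W : Set V := G.neighborSet u ∩ G.neighborSet v with hWdef
  have hWindep : _root_.IsIndepSet G W := by
    intro x hx y hy hxy
    exact hdense ⟨x, y, hx.1, hx.2, hy.1, hy.2, hxy⟩
  have hWI : W.ncard ≤ I.ncard := hImax W hWindep
  have hdisj : Disjoint (G.neighborSet u ∪ G.neighborSet v) I := by
    rw [Set.disjoint_left]
    rintro z (hz | hz) hzI
    · exact hI hu hzI hz
    · exact hI hv hzI hz
  have h1 : (G.neighborSet u ∪ G.neighborSet v).ncard + I.ncard ≤ Fintype.card V := by
    rw [← Set.ncard_union_eq hdisj (Set.toFinite _) (Set.toFinite _)]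
    have h := Set.ncard_le_ncard (Set.subset_univ
      ((G.neighborSet u ∪ G.neighborSet v) ∪ I)) Set.finite_univ
    simpa [Set.ncard_univ, Nat.card_eq_fintype_card] using h
  have h2 : (G.neighborSet u ∪ G.neighborSet v).ncard + W.ncard =
      (G.neighborSet u).ncard + (G.neighborSet v).ncard := by
    rw [hWdef]
    exact Set.ncard_union_add_ncard_inter _ _ (Set.toFinite _) (Set.toFinite _)
  have hdu : (G.neighborSet u).ncard = G.degree u := by
    simp [Set.ncard_eq_toFinset_card', SimpleGraph.degree, SimpleGraph.neighborFinset]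
  have hdv : (G.neighborSet v).ncard = G.degree v := by
    simp [Set.ncard_eq_toFinset_card', SimpleGraph.degree, SimpleGraph.neighborFinset]
  have hmu : G.minDegree ≤ G.degree u := G.minDegree_le_degree u
  have hmv : G.minDegree ≤ G.degree v := G.minDegree_le_degree v
  have hfin : 2 * G.minDegree ≤ Fintype.card V := by omega
  have : (Fintype.card V : ℝ) < 2 * (G.minDegree : ℝ) := by linarith
  have : Fintype.card V < 2 * G.minDegree := by exact_mod_cast this
  omega
end

section
/- Let G be a finite simple graph with δ(G) > (1/2)·|G| and suppose v₁v₂v₃v₄ is an induced 4-cycle in G (edges v₁v₂, v₂v₃, v₃v₄, v₄v₁ and non-edges v₁v₃, v₂v₄). Then at least one of the pairs v₁, v₃ and v₂, v₄ is dense. -/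
open SimpleGraph

/-- In a graph of minimum degree greater than `|G|/2`, at least one of the two non-edges
of an induced 4-cycle is a dense pair. -/
theorem induced_four_cycle_dense_pair {V : Type} [Fintype V]
    (G : SimpleGraph V) [DecidableRel G.Adj]
    (hdeg : (1 / 2 : ℝ) * (Fintype.card V : ℝ) < (G.minDegree : ℝ))
    (v₁ v₂ v₃ v₄ : V)
    (h12 : G.Adj v₁ v₂) (h23 : G.Adj v₂ v₃) (h34 : G.Adj v₃ v₄) (h41 : G.Adj v₄ v₁)
    (h13ne : v₁ ≠ v₃) (h24ne : v₂ ≠ v₄)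
    (h13 : ¬ G.Adj v₁ v₃) (h24 : ¬ G.Adj v₂ v₄) :
    DensePair G v₁ v₃ ∨ DensePair G v₂ v₄ := by
  by_contra hcon
  push_neg at hcon
  obtain ⟨hd1, hd2⟩ := hcon
  classical
  set n := Fintype.card V with hn
  have hδ : n < 2 * G.minDegree := by
    have : (n : ℝ) < 2 * (G.minDegree : ℝ) := by linarith
    exact_mod_cast this
  set N : V → Finset V := fun v => G.neighborFinset v with hN
  -- A = N v₁ ∩ N v₂ avoids N v₃ ∪ N v₄
  have hdisj1 : Disjoint (N v₁ ∩ N v₂) (N v₃ ∪ N v₄) := by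
    rw [Finset.disjoint_left]
    intro x hx hx'
    simp only [hN, Finset.mem_inter, Finset.mem_union, SimpleGraph.mem_neighborFinset] at hx hx'
    obtain ⟨hx1, hx2⟩ := hx
    rcases hx' with hx3 | hx4
    · exact hd1 ⟨x, v₂, hx1, hx3, h12, h23.symm, hx2.symm⟩
    · exact hd2 ⟨x, v₁, hx2, hx4, h12.symm, h41, hx1.symm⟩
  -- B = N v₃ ∩ N v₄ avoids N v₁ ∪ N v₂
  have hdisj2 : Disjoint (N v₃ ∩ N v₄) (N v₁ ∪ N v₂) := by
    rw [Finset.disjoint_left]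
    intro x hx hx'
    simp only [hN, Finset.mem_inter, Finset.mem_union, SimpleGraph.mem_neighborFinset] at hx hx'
    obtain ⟨hx3, hx4⟩ := hx
    rcases hx' with hx1 | hx2
    · exact hd1 ⟨x, v₄, hx1, hx3, h41.symm, h34, hx4.symm⟩
    · exact hd2 ⟨x, v₃, hx2, hx4, h23, h34.symm, hx3.symm⟩
  have key1 : (N v₁ ∩ N v₂).card + (N v₃ ∪ N v₄).card ≤ n := by
    rw [← Finset.card_union_of_disjoint hdisj1]
    exact Finset.card_le_univ _
  have key2 : (N v₃ ∩ N v₄).card + (N v₁ ∪ N v₂).card ≤ n := by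
    rw [← Finset.card_union_of_disjoint hdisj2]
    exact Finset.card_le_univ _
  have e1 : (N v₁ ∪ N v₂).card + (N v₁ ∩ N v₂).card = (N v₁).card + (N v₂).card :=
    Finset.card_union_add_card_inter _ _
  have e2 : (N v₃ ∪ N v₄).card + (N v₃ ∩ N v₄).card = (N v₃).card + (N v₄).card :=
    Finset.card_union_add_card_inter _ _
  have hdeg' : ∀ v : V, G.minDegree ≤ (N v).card := fun v => by
    simpa [hN, SimpleGraph.card_neighborFinset_eq_degree] using G.minDegree_le_degree v
  have := hdeg' v₁
  have := hdeg' v₂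
  have := hdeg' v₃
  have := hdeg' v₄
  omega
end
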